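/- arXiv:2601.23274 — 5 statements merged into one kernel-verified Lean document; each statement's English description precedes it below -/
import Mathlib

section
/- Let C be a cycle in a simple graph G whose length equals the girth of G, with |C| ≥ 7. Then for every two adjacent vertices u, v both outside V(C), the total number of neighbors of u on C plus the number of neighbors of v on C is at most 1. -/
open Classical Finset

namespace StmtAux

open SimpleGraph Walk

variable {V : Type*} {G : SimpleGraph V}

lemma isPath_concat {u v w : V} {p : G.Walk u v} (h : G.Adj v w) (hp : p.IsPath)
    (hw : w ∉ p.support) : (p.concat h).IsPath := by
  rw [← isPath_reverse_iff, reverse_concat, cons_isPath_iff, isPath_reverse_iff]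
  refine ⟨hp, ?_⟩
  rwa [support_reverse, List.mem_reverse]

lemma short_arc {c : V} (C : G.Walk c c) {x y : V}
    (hx : x ∈ C.support) (hy : y ∈ C.support) :
    ∃ p : G.Walk x y, p.IsPath ∧ (∀ z ∈ p.support, z ∈ C.support) ∧
      2 * p.length ≤ C.length := by
  classical
  set C' := C.rotate x hx with hC'
  have hsub : ∀ z ∈ C'.support, z ∈ C.support := by
    intro z hz
    rw [hC', rotate, mem_support_append_iff] at hz
    rcases hz with hz | hz
    · exact support_dropUntil_subset _ _ hz
    · exact support_takeUntil_subset _ _ hz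
  have hy' : y ∈ C'.support := by
    rw [hC', rotate, mem_support_append_iff]
    rw [← take_spec C hx, mem_support_append_iff] at hy
    tauto
  have hlenC' : C'.length = C.length := by
    rw [hC', rotate, length_append]
    conv_rhs => rw [← take_spec C hx]
    rw [length_append]; omega
  have hsum : (C'.takeUntil y hy').length + (C'.dropUntil y hy').length = C.length := by
    rw [← hlenC']
    conv_rhs => rw [← take_spec C' hy']
    rw [length_append]
  by_cases hle : 2 * (C'.takeUntil y hy').length ≤ C.length
  · refine ⟨(C'.takeUntil y hy').bypass, bypass_isPath _, ?_, ?_⟩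
    · intro z hz
      exact hsub z (support_takeUntil_subset _ _ (support_bypass_subset _ hz))
    · have := length_bypass_le (C'.takeUntil y hy')
      omega
  · refine ⟨(C'.dropUntil y hy').reverse.bypass, bypass_isPath _, ?_, ?_⟩
    · intro z hz
      have h1 := support_bypass_subset _ hz
      rw [support_reverse, List.mem_reverse] at h1
      exact hsub z (support_dropUntil_subset _ _ h1)
    · have h1 := length_bypass_le (C'.dropUntil y hy').reverse
      rw [length_reverse] at h1
      omega

lemma girth_le_of_cycle {a : V} {W : G.Walk a a} (hW : W.IsCycle)
    {c : V} {C : G.Walk c c} (hlen : (C.length : ℕ∞) = G.girth) :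
    C.length ≤ W.length := by
  have h1 : G.egirth ≤ (W.length : ℕ∞) := by
    apply iInf_le_of_le a
    apply iInf_le_of_le W
    exact iInf_le _ hW
  have h2 : G.egirth ≠ ⊤ := by
    intro htop
    rw [htop] at h1
    exact (ENat.coe_ne_top W.length) (top_le_iff.mp h1)
  have h3 : (G.girth : ℕ∞) = G.egirth := ENat.coe_toNat h2
  rw [← h3] at h1
  have h4 : (C.length : ℕ∞) ≤ (W.length : ℕ∞) := hlen ▸ h1
  exact_mod_cast h4

/-- No vertex off the cycle has two neighbors on the cycle. -/
lemma no_two_nbrs {c : V} {C : G.Walk c c} (hC : C.IsCycle)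
    (hlen : (C.length : ℕ∞) = G.girth) (h7 : 7 ≤ C.length)
    {u a b : V} (hu : u ∉ C.support) (ha : a ∈ C.support) (hb : b ∈ C.support)
    (hab : a ≠ b) (hua : G.Adj u a) (hub : G.Adj u b) : False := by
  obtain ⟨p, hp, hpsub, hplen⟩ := short_arc C ha hb
  have hup : u ∉ p.support := fun h => hu (hpsub u h)
  have hq : (p.concat hub.symm).IsPath := isPath_concat _ hp hup
  have hW : (Walk.cons hua (p.concat hub.symm)).IsCycle := by
    rw [cons_isCycle_iff]
    refine ⟨hq, ?_⟩
    rw [edges_concat]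
    intro hmem
    rw [List.concat_eq_append, List.mem_append, List.mem_singleton] at hmem
    rcases hmem with hmem | hmem
    · exact hup (Walk.fst_mem_support_of_mem_edges p hmem)
    · rw [Sym2.eq_iff] at hmem
      rcases hmem with ⟨h1, _⟩ | ⟨_, h2⟩
      · exact hu (h1 ▸ hb)
      · exact hab h2
  have := girth_le_of_cycle hW hlen
  simp only [length_cons, length_concat] at this
  omega

/-- For adjacent `u,v` off the cycle, `u` and `v` cannot both have a neighbor on the cycle. -/
lemma no_mixed_nbrs {c : V} {C : G.Walk c c} (hC : C.IsCycle)
    (hlen : (C.length : ℕ∞) = G.girth) (h7 : 7 ≤ C.length)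
    {u v a b : V} (hu : u ∉ C.support) (hv : v ∉ C.support) (huv : G.Adj u v)
    (ha : a ∈ C.support) (hb : b ∈ C.support)
    (hua : G.Adj u a) (hvb : G.Adj v b) : False := by
  have hau : a ≠ u := fun h => hu (h ▸ ha)
  have hav : a ≠ v := fun h => hv (h ▸ ha)
  have hbu : b ≠ u := fun h => hu (h ▸ hb)
  have hbv : b ≠ v := fun h => hv (h ▸ hb)
  by_cases hab : a = b
  · subst hab
    -- triangle u - v - a - u
    have hq : (Walk.cons hvb (Walk.cons hua.symm Walk.nil)).IsPath := by
      rw [cons_isPath_iff, cons_isPath_iff]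
      refine ⟨⟨Walk.IsPath.nil, ?_⟩, ?_⟩
      · simpa using hau
      · simp only [support_cons, support_nil, List.mem_cons, List.not_mem_nil]
        rintro (h | h | h)
        exacts [hav h.symm, huv.ne h.symm, h]
    have hW : (Walk.cons huv (Walk.cons hvb (Walk.cons hua.symm Walk.nil))).IsCycle := by
      rw [cons_isCycle_iff]
      refine ⟨hq, ?_⟩
      simp only [edges_cons, edges_nil, List.mem_cons, List.not_mem_nil, or_false]
      rintro (h | h) <;> rw [Sym2.eq_iff] at h
      · rcases h with ⟨h1, _⟩ | ⟨h1, _⟩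
        · exact huv.ne h1
        · exact hau h1.symm
      · rcases h with ⟨h1, h2⟩ | ⟨_, h2⟩
        · exact hau h1.symm
        · exact hav h2.symm
    have := girth_le_of_cycle hW hlen
    simp only [length_cons, length_nil] at this
    omega
  · obtain ⟨p, hp, hpsub, hplen⟩ := short_arc C hb ha
    have hup : u ∉ p.support := fun h => hu (hpsub u h)
    have hvp : v ∉ p.support := fun h => hv (hpsub v h)
    have hq1 : (p.concat hua.symm).IsPath := isPath_concat _ hp hup
    have hq : (Walk.cons hvb (p.concat hua.symm)).IsPath := by
      rw [cons_isPath_iff]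
      refine ⟨hq1, ?_⟩
      rw [support_concat, List.mem_append, List.mem_singleton]
      push_neg
      exact ⟨hvp, huv.ne'⟩
    have hW : (Walk.cons huv (Walk.cons hvb (p.concat hua.symm))).IsCycle := by
      rw [cons_isCycle_iff]
      refine ⟨hq, ?_⟩
      rw [edges_cons, edges_concat]
      intro hmem
      rcases List.mem_cons.mp hmem with hmem | hmem
      · rw [Sym2.eq_iff] at hmem
        rcases hmem with ⟨h1, _⟩ | ⟨h1, _⟩
        · exact huv.ne h1
        · exact hbu h1.symm
      · rw [List.concat_eq_append, List.mem_append, List.mem_singleton] at hmem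
        rcases hmem with hmem | hmem
        · exact hup (Walk.fst_mem_support_of_mem_edges p hmem)
        · rw [Sym2.eq_iff] at hmem
          rcases hmem with ⟨h1, _⟩ | ⟨_, h2⟩
          · exact hau h1.symm
          · exact hav h2.symm
    have := girth_le_of_cycle hW hlen
    simp only [length_cons, length_concat] at this
    omega

end StmtAux

/-- If `C` is a cycle of a simple graph `G` whose length equals the girth of `G` and
`|C| ≥ 7`, then for any two adjacent vertices `u, v` outside `C`, the number of neighbors
of `u` on `C` plus the number of neighbors of `v` on `C` is at most `1`. -/
theorem stmt3 {V : Type*} [Fintype V] (G : SimpleGraph V) (c : V) (C : G.Walk c c)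
    (hC : C.IsCycle) (hlen : (C.length : ℕ∞) = G.girth) (h7 : 7 ≤ C.length)
    (u v : V) (hu : u ∉ C.support) (hv : v ∉ C.support) (huv : G.Adj u v) :
    (C.support.toFinset.filter fun w => G.Adj u w).card +
      (C.support.toFinset.filter fun w => G.Adj v w).card ≤ 1 := by
  classical
  by_contra h
  push_neg at h
  set Su := C.support.toFinset.filter fun w => G.Adj u w with hSu
  set Sv := C.support.toFinset.filter fun w => G.Adj v w with hSv
  have hmemu : ∀ w ∈ Su, w ∈ C.support ∧ G.Adj u w := by
    intro w hw
    rw [hSu, Finset.mem_filter, List.mem_toFinset] at hw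
    exact hw
  have hmemv : ∀ w ∈ Sv, w ∈ C.support ∧ G.Adj v w := by
    intro w hw
    rw [hSv, Finset.mem_filter, List.mem_toFinset] at hw
    exact hw
  by_cases hvne : Sv.Nonempty
  · by_cases hune : Su.Nonempty
    · obtain ⟨a, haS⟩ := hune
      obtain ⟨b, hbS⟩ := hvne
      obtain ⟨ha, hua⟩ := hmemu a haS
      obtain ⟨hb, hvb⟩ := hmemv b hbS
      exact StmtAux.no_mixed_nbrs hC hlen h7 hu hv huv ha hb hua hvb
    · rw [Finset.not_nonempty_iff_eq_empty] at hune
      have h2 : 1 < Sv.card := by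
        rw [hune] at h
        simpa using h
      obtain ⟨a, haS, b, hbS, hab⟩ := Finset.one_lt_card.mp h2
      obtain ⟨ha, hva⟩ := hmemv a haS
      obtain ⟨hb, hvb⟩ := hmemv b hbS
      exact StmtAux.no_two_nbrs hC hlen h7 hv ha hb hab hva hvb
  · rw [Finset.not_nonempty_iff_eq_empty] at hvne
    have h2 : 1 < Su.card := by
      rw [hvne] at h
      simpa using h
    obtain ⟨a, haS, b, hbS, hab⟩ := Finset.one_lt_card.mp h2
    obtain ⟨ha, hua⟩ := hmemu a haS
    obtain ⟨hb, hub⟩ := hmemu b hbS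
    exact StmtAux.no_two_nbrs hC hlen h7 hu ha hb hab hua hub
end

section
/- Let C be a cycle in a simple graph G whose length equals the girth of G, with |C| ≥ 8. Then for every path v₁v₂v₃v₄v₅ in G - V(C), the sum over i of |N_C(v_i)| is at most 2. -/
open Classical Finset

namespace SimpleGraph.Walk

variable {V : Type*} {G : SimpleGraph V}

lemma end_mem_tail_support' {u v : V} (p : G.Walk u v) (h : ¬ p.Nil) :
    v ∈ p.support.tail := by
  cases p with
  | nil => simp at h
  | cons h q => simpa using q.end_mem_support

lemma mem_support_rotate' [DecidableEq V] {u v x : V} (c : G.Walk v v) (hc : ¬ c.Nil) (h : u ∈ c.support) :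
    x ∈ (c.rotate u h).support ↔ x ∈ c.support := by
  have hperm := (support_rotate c u h).perm
  rw [support_eq_cons (c.rotate u h), support_eq_cons c]
  simp only [List.mem_cons]
  constructor
  · rintro (rfl | hx)
    · rw [support_eq_cons c] at h; exact List.mem_cons.mp h
    · right; exact hperm.mem_iff.mp hx
  · rintro (rfl | hx)
    · right; exact hperm.mem_iff.mpr (end_mem_tail_support' c hc)
    · right; exact hperm.mem_iff.mpr hx

lemma length_rotate' [DecidableEq V] {u v : V} (c : G.Walk v v) (h : u ∈ c.support) :
    (c.rotate u h).length = c.length := by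
  have h1 := congrArg length (take_spec c h)
  rw [length_append] at h1
  show ((c.dropUntil u h).append (c.takeUntil u h)).length = c.length
  rw [length_append]
  omega

lemma isPath_takeUntil_of_isCycle [DecidableEq V] {x y : V} {D : G.Walk x x}
    (hD : D.IsCycle) (hy : y ∈ D.support) : (D.takeUntil y hy).IsPath := by
  rw [isPath_def]
  have hspec := take_spec D hy
  have hsup : (D.takeUntil y hy).support ++ (D.dropUntil y hy).support.tail = D.support := by
    rw [← support_append, hspec]
  have htails : (D.takeUntil y hy).support.tail ++ (D.dropUntil y hy).support.tail
      = D.support.tail := by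
    rw [support_eq_cons (D.takeUntil y hy), List.cons_append, support_eq_cons D] at hsup
    exact (List.cons.injEq _ _ _ _ ▸ hsup).2
  have hnd : ((D.takeUntil y hy).support.tail ++ (D.dropUntil y hy).support.tail).Nodup := by
    rw [htails]; exact hD.support_nodup
  rw [List.nodup_append'] at hnd
  obtain ⟨hnd1, hnd2, hdisj⟩ := hnd
  rw [support_eq_cons (D.takeUntil y hy), List.nodup_cons]
  refine ⟨?_, hnd1⟩
  by_cases hyx : y = x
  · subst hyx
    intro hmem
    have hcount := count_support_takeUntil_eq_one D hy
    rw [support_eq_cons (D.takeUntil y hy), List.count_cons_self] at hcount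
    have : 1 ≤ (D.takeUntil y hy).support.tail.count y := List.one_le_count_iff.mpr hmem
    omega
  · intro hmem
    have hxdr : x ∈ (D.dropUntil y hy).support.tail :=
      end_mem_tail_support' _ (not_nil_of_ne hyx)
    exact hdisj hmem hxdr

lemma isPath_dropUntil_of_isCycle [DecidableEq V] {x y : V} {D : G.Walk x x}
    (hD : D.IsCycle) (hy : y ∈ D.support) (hyx : y ≠ x) : (D.dropUntil y hy).IsPath := by
  rw [isPath_def]
  have hspec := take_spec D hy
  have hsup : (D.takeUntil y hy).support ++ (D.dropUntil y hy).support.tail = D.support := by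
    rw [← support_append, hspec]
  have htails : (D.takeUntil y hy).support.tail ++ (D.dropUntil y hy).support.tail
      = D.support.tail := by
    rw [support_eq_cons (D.takeUntil y hy), List.cons_append, support_eq_cons D] at hsup
    exact (List.cons.injEq _ _ _ _ ▸ hsup).2
  have hnd : ((D.takeUntil y hy).support.tail ++ (D.dropUntil y hy).support.tail).Nodup := by
    rw [htails]; exact hD.support_nodup
  rw [List.nodup_append'] at hnd
  obtain ⟨hnd1, hnd2, hdisj⟩ := hnd
  rw [support_eq_cons (D.dropUntil y hy), List.nodup_cons]
  refine ⟨?_, hnd2⟩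
  intro hmem
  have hyT : y ∈ (D.takeUntil y hy).support.tail :=
    end_mem_tail_support' _ (not_nil_of_ne (Ne.symm hyx))
  exact hdisj hyT hmem

end SimpleGraph.Walk

open SimpleGraph Walk in
private lemma keyCycleBound {V : Type*} [DecidableEq V] {G : SimpleGraph V} {c : V}
    {C : G.Walk c c}
    (hg : ∀ (a : V) (W : G.Walk a a), W.IsCycle → C.length ≤ W.length)
    {u w x y : V} (P : G.Walk u w) (hP : P.IsPath)
    (hPo : ∀ t ∈ P.support, t ∉ C.support)
    (hux : G.Adj u x) (hwy : G.Adj w y)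
    (hne : x ≠ y ∨ u ≠ w)
    (A : G.Walk y x) (hA : A.IsPath) (hAs : ∀ t ∈ A.support, t ∈ C.support) :
    C.length ≤ P.length + A.length + 2 := by
  have hxC : x ∈ C.support := hAs _ A.end_mem_support
  have hyC : y ∈ C.support := hAs _ A.start_mem_support
  have hRsup : (P.append (Walk.cons hwy A)).support = P.support ++ A.support := by
    rw [support_append, support_cons, List.tail_cons]
  have hRp : (P.append (Walk.cons hwy A)).IsPath := by
    rw [isPath_def, hRsup]
    exact hP.support_nodup.append hA.support_nodup
      (fun t ht ht' => hPo t ht (hAs t ht'))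
  have hcyc : (Walk.cons hux.symm (P.append (Walk.cons hwy A))).IsCycle := by
    refine SimpleGraph.Path.cons_isCycle ⟨_, hRp⟩ hux.symm ?_
    intro he
    have he' : s(x, u) ∈ (P.append (Walk.cons hwy A)).edges := he
    rw [edges_append, List.mem_append, edges_cons, List.mem_cons] at he'
    rcases he' with h1 | h2 | h3
    · exact hPo x (fst_mem_support_of_mem_edges P h1) hxC
    · rw [Sym2.eq_iff] at h2
      rcases h2 with ⟨rfl, rfl⟩ | ⟨rfl, rfl⟩
      · exact hPo x P.end_mem_support hxC
      · rcases hne with h | h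
        · exact h rfl
        · exact h rfl
    · exact hPo u P.start_mem_support (hAs u (snd_mem_support_of_mem_edges A h3))
  have hlen := hg x _ hcyc
  rw [length_cons, length_append, length_cons] at hlen
  omega

open SimpleGraph Walk in
private lemma arcs2 {V : Type*} [DecidableEq V] {G : SimpleGraph V} {c : V}
    {C : G.Walk c c} (hC : C.IsCycle) {x y : V}
    (hx : x ∈ C.support) (hy : y ∈ C.support) (hxy : x ≠ y) :
    ∃ A B : G.Walk y x, A.IsPath ∧ B.IsPath ∧
      (∀ t ∈ A.support, t ∈ C.support) ∧ (∀ t ∈ B.support, t ∈ C.support) ∧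
      A.length + B.length = C.length := by
  have hCnil : ¬ C.Nil := by
    rw [nil_iff_length_eq]
    have := hC.three_le_length
    omega
  have hD : (C.rotate y hy).IsCycle := hC.rotate hy
  have hxD : x ∈ (C.rotate y hy).support := (mem_support_rotate' C hCnil hy).mpr hx
  refine ⟨(C.rotate y hy).takeUntil x hxD, ((C.rotate y hy).dropUntil x hxD).reverse,
    isPath_takeUntil_of_isCycle hD hxD,
    (isPath_dropUntil_of_isCycle hD hxD hxy).reverse, ?_, ?_, ?_⟩
  · intro t ht
    exact (mem_support_rotate' C hCnil hy).mp (support_takeUntil_subset _ hxD ht)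
  · intro t ht
    rw [support_reverse, List.mem_reverse] at ht
    exact (mem_support_rotate' C hCnil hy).mp (support_dropUntil_subset _ hxD ht)
  · have h1 := congrArg Walk.length (take_spec (C.rotate y hy) hxD)
    rw [length_append] at h1
    rw [length_reverse]
    rw [length_rotate'] at h1
    omega

open SimpleGraph Walk in
private lemma arcs3 {V : Type*} [DecidableEq V] {G : SimpleGraph V} {c : V}
    {C : G.Walk c c} (hC : C.IsCycle) {x y z : V}
    (hx : x ∈ C.support) (hy : y ∈ C.support) (hz : z ∈ C.support)
    (hxy : x ≠ y) (hxz : x ≠ z) (hyz : y ≠ z) :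
    (∃ A : G.Walk x y, ∃ B : G.Walk y z, ∃ E : G.Walk z x,
      A.IsPath ∧ B.IsPath ∧ E.IsPath ∧
      (∀ t ∈ A.support, t ∈ C.support) ∧ (∀ t ∈ B.support, t ∈ C.support) ∧
      (∀ t ∈ E.support, t ∈ C.support) ∧
      A.length + B.length + E.length = C.length) ∨
    (∃ A : G.Walk x z, ∃ B : G.Walk z y, ∃ E : G.Walk y x,
      A.IsPath ∧ B.IsPath ∧ E.IsPath ∧
      (∀ t ∈ A.support, t ∈ C.support) ∧ (∀ t ∈ B.support, t ∈ C.support) ∧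
      (∀ t ∈ E.support, t ∈ C.support) ∧
      A.length + B.length + E.length = C.length) := by
  have hCnil : ¬ C.Nil := by
    rw [nil_iff_length_eq]
    have := hC.three_le_length
    omega
  set D := C.rotate x hx with hDdef
  have hD : D.IsCycle := hC.rotate hx
  have hmemD : ∀ t, t ∈ D.support ↔ t ∈ C.support := fun t => mem_support_rotate' C hCnil hx
  have hyD : y ∈ D.support := (hmemD y).mpr hy
  have hzD : z ∈ D.support := (hmemD z).mpr hz
  have hDlen : D.length = C.length := length_rotate' C hx
  have hT : (D.takeUntil y hyD).IsPath := isPath_takeUntil_of_isCycle hD hyD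
  have hDr : (D.dropUntil y hyD).IsPath := isPath_dropUntil_of_isCycle hD hyD hxy.symm
  have hsplit : (D.takeUntil y hyD).length + (D.dropUntil y hyD).length = C.length := by
    have h1 := congrArg Walk.length (take_spec D hyD)
    rw [length_append] at h1
    omega
  have hTsub : ∀ t ∈ (D.takeUntil y hyD).support, t ∈ C.support :=
    fun t ht => (hmemD t).mp (support_takeUntil_subset _ hyD ht)
  have hDrsub : ∀ t ∈ (D.dropUntil y hyD).support, t ∈ C.support :=
    fun t ht => (hmemD t).mp (support_dropUntil_subset _ hyD ht)
  by_cases hzDr : z ∈ (D.dropUntil y hyD).support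
  · left
    have hsplit2 : ((D.dropUntil y hyD).takeUntil z hzDr).length
        + ((D.dropUntil y hyD).dropUntil z hzDr).length = (D.dropUntil y hyD).length := by
      have h1 := congrArg Walk.length (take_spec (D.dropUntil y hyD) hzDr)
      rw [length_append] at h1
      omega
    exact ⟨D.takeUntil y hyD, (D.dropUntil y hyD).takeUntil z hzDr,
      (D.dropUntil y hyD).dropUntil z hzDr, hT, hDr.takeUntil _, hDr.dropUntil _,
      hTsub,
      fun t ht => hDrsub t (support_takeUntil_subset _ hzDr ht),
      fun t ht => hDrsub t (support_dropUntil_subset _ hzDr ht),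
      by omega⟩
  · right
    have hzT : z ∈ (D.takeUntil y hyD).support := by
      have : z ∈ (D.takeUntil y hyD).support ++ (D.dropUntil y hyD).support.tail := by
        rw [← support_append, take_spec]
        exact hzD
      rcases List.mem_append.mp this with h | h
      · exact h
      · exact absurd (List.mem_of_mem_tail h) hzDr
    have hsplit2 : ((D.takeUntil y hyD).takeUntil z hzT).length
        + ((D.takeUntil y hyD).dropUntil z hzT).length = (D.takeUntil y hyD).length := by
      have h1 := congrArg Walk.length (take_spec (D.takeUntil y hyD) hzT)
      rw [length_append] at h1
      omega
    exact ⟨(D.takeUntil y hyD).takeUntil z hzT, (D.takeUntil y hyD).dropUntil z hzT,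
      D.dropUntil y hyD, hT.takeUntil _, hT.dropUntil _, hDr,
      fun t ht => hTsub t (support_takeUntil_subset _ hzT ht),
      fun t ht => hTsub t (support_dropUntil_subset _ hzT ht),
      hDrsub,
      by omega⟩

open SimpleGraph Walk in
private lemma chainN {V : Type*} {G : SimpleGraph V} (vs : Fin 5 → V)
    (hinj : Function.Injective vs)
    (hpath : ∀ i : Fin 4, G.Adj (vs i.castSucc) (vs i.succ)) :
    ∀ (n : ℕ) (a b : Fin 5), (b : ℕ) = (a : ℕ) + n →
      ∃ P : G.Walk (vs a) (vs b), P.IsPath ∧ P.length = n ∧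
        ∀ t ∈ P.support, ∃ k : Fin 5, (a : ℕ) ≤ (k : ℕ) ∧ t = vs k := by
  intro n
  induction n with
  | zero =>
    intro a b hb
    have hab : a = b := Fin.ext (by omega)
    subst hab
    exact ⟨Walk.nil, Walk.IsPath.nil, rfl, by
      intro t ht
      rw [mem_support_nil_iff] at ht
      exact ⟨a, le_rfl, ht⟩⟩
  | succ m ih =>
    intro a b hb
    have ha4 : (a : ℕ) < 4 := by have := b.isLt; omega
    set i : Fin 4 := ⟨(a : ℕ), ha4⟩ with hidef
    have hca : i.castSucc = a := Fin.ext (by simp [hidef])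
    have hadj : G.Adj (vs a) (vs i.succ) := by rw [← hca]; exact hpath i
    have hsv : (i.succ : ℕ) = (a : ℕ) + 1 := by simp [hidef]
    obtain ⟨P, hP, hPl, hPs⟩ := ih i.succ b (by omega)
    refine ⟨Walk.cons hadj P, ?_, by simp [hPl], ?_⟩
    · rw [Walk.cons_isPath_iff]
      refine ⟨hP, fun hmem => ?_⟩
      obtain ⟨k, hk1, hk2⟩ := hPs _ hmem
      have : a = k := hinj hk2
      omega
    · intro t ht
      rw [support_cons, List.mem_cons] at ht
      rcases ht with rfl | ht
      · exact ⟨a, le_rfl, rfl⟩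
      · obtain ⟨k, hk1, hk2⟩ := hPs t ht
        exact ⟨k, by omega, hk2⟩

open SimpleGraph Walk in
private lemma chain {V : Type*} {G : SimpleGraph V} (vs : Fin 5 → V)
    (hinj : Function.Injective vs)
    (hpath : ∀ i : Fin 4, G.Adj (vs i.castSucc) (vs i.succ)) (a b : Fin 5) :
    ∃ P : G.Walk (vs a) (vs b), P.IsPath ∧ P.length = Nat.dist (a : ℕ) (b : ℕ) ∧
      ∀ t ∈ P.support, ∃ k : Fin 5, t = vs k := by
  rcases le_total (a : ℕ) (b : ℕ) with hab | hab
  · obtain ⟨P, h1, h2, h3⟩ := chainN vs hinj hpath ((b : ℕ) - (a : ℕ)) a b (by omega)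
    refine ⟨P, h1, by rw [h2, Nat.dist]; omega, fun t ht => ⟨(h3 t ht).choose, (h3 t ht).choose_spec.2⟩⟩
  · obtain ⟨P, h1, h2, h3⟩ := chainN vs hinj hpath ((a : ℕ) - (b : ℕ)) b a (by omega)
    refine ⟨P.reverse, h1.reverse, by rw [length_reverse, h2, Nat.dist]; omega, fun t ht => ?_⟩
    rw [support_reverse, List.mem_reverse] at ht
    exact ⟨(h3 t ht).choose, (h3 t ht).choose_spec.2⟩

/-- If `C` is a cycle of a simple graph `G` whose length equals the girth of `G` and
`|C| ≥ 8`, then for every path `v₁v₂v₃v₄v₅` in `G - V(C)`, the total number of neighbors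
of the `vᵢ` on `C` is at most `2`. -/
theorem stmt4 {V : Type*} [Fintype V] (G : SimpleGraph V) (c : V) (C : G.Walk c c)
    (hC : C.IsCycle) (hlen : (C.length : ℕ∞) = G.girth) (h8 : 8 ≤ C.length)
    (vs : Fin 5 → V) (hinj : Function.Injective vs)
    (hpath : ∀ i : Fin 4, G.Adj (vs i.castSucc) (vs i.succ))
    (hout : ∀ i, vs i ∉ C.support) :
    ∑ i : Fin 5, (C.support.toFinset.filter fun w => G.Adj (vs i) w).card ≤ 2 := by
  classical
  by_contra hcon
  push_neg at hcon
  have hg : ∀ (a : V) (W : G.Walk a a), W.IsCycle → C.length ≤ W.length := by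
    intro a W hW
    have h1 : G.egirth ≤ W.length := by
      rw [SimpleGraph.egirth]
      exact iInf_le_of_le a (iInf_le_of_le W (iInf_le _ hW))
    have h2 : G.egirth ≤ C.length := by
      rw [SimpleGraph.egirth]
      exact iInf_le_of_le c (iInf_le_of_le C (iInf_le _ hC))
    have h3 : G.egirth ≠ ⊤ := ne_top_of_le_ne_top (by simp) h2
    have h4 : (G.girth : ℕ∞) = G.egirth := ENat.coe_toNat h3
    have h5 : (C.length : ℕ∞) ≤ (W.length : ℕ∞) := by
      rw [hlen, h4]; exact h1
    exact_mod_cast h5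
  set f : Fin 5 → ℕ := fun i => (C.support.toFinset.filter fun w => G.Adj (vs i) w).card
    with hf
  have hmem : ∀ (i : Fin 5) (t : V),
      t ∈ (C.support.toFinset.filter fun w => G.Adj (vs i) w) ↔
        (t ∈ C.support ∧ G.Adj (vs i) t) := by
    intro i t; simp [List.mem_toFinset]
  have KEY : ∀ (i j : Fin 5) (x y : V), G.Adj (vs i) x → G.Adj (vs j) y →
      (x ≠ y ∨ i ≠ j) → ∀ (A : G.Walk y x), A.IsPath →
      (∀ t ∈ A.support, t ∈ C.support) →
      C.length ≤ Nat.dist (i : ℕ) (j : ℕ) + A.length + 2 := by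
    intro i j x y hix hjy hne A hA hAs
    obtain ⟨P, hP, hPl, hPs⟩ := chain vs hinj hpath i j
    have hPo : ∀ t ∈ P.support, t ∉ C.support := by
      intro t ht
      obtain ⟨k, rfl⟩ := hPs t ht
      exact hout k
    have hne' : x ≠ y ∨ vs i ≠ vs j := by
      rcases hne with h | h
      · exact Or.inl h
      · exact Or.inr fun e => h (hinj e)
    have := keyCycleBound hg P hP hPo hix hjy hne' A hA hAs
    omega
  by_cases hbig : ∃ i, 2 ≤ f i
  · obtain ⟨i, hi⟩ := hbig
    have hi' : 1 < (C.support.toFinset.filter fun w => G.Adj (vs i) w).card := by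
      have h := hi; simp only [hf] at h; omega
    obtain ⟨x, hxm, y, hym, hxy⟩ := Finset.one_lt_card.mp hi'
    rw [hmem] at hxm hym
    obtain ⟨A, B, hA, hB, hAs, hBs, hAB⟩ := arcs2 hC hxm.1 hym.1 hxy
    have k1 := KEY i i x y hxm.2 hym.2 (Or.inl hxy) A hA hAs
    have k2 := KEY i i x y hxm.2 hym.2 (Or.inl hxy) B hB hBs
    rw [Nat.dist_self] at k1 k2
    omega
  · push_neg at hbig
    have hsum : ∑ i, f i ≤ (Finset.univ.filter fun i => 1 ≤ f i).card := by
      rw [Finset.card_filter]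
      apply Finset.sum_le_sum
      intro i _
      have := hbig i
      split_ifs <;> omega
    have hcon' : 2 < ∑ i, f i := hcon
    have h3card : 3 ≤ (Finset.univ.filter fun i => 1 ≤ f i).card := by omega
    obtain ⟨i, hiS, j, hjS, hij⟩ := Finset.one_lt_card.mp
      (by omega : 1 < (Finset.univ.filter fun i => 1 ≤ f i).card)
    have hjmem : j ∈ (Finset.univ.filter fun i => 1 ≤ f i).erase i :=
      Finset.mem_erase.mpr ⟨hij.symm, hjS⟩
    have hcard2 : 0 < (((Finset.univ.filter fun i => 1 ≤ f i).erase i).erase j).card := by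
      rw [Finset.card_erase_of_mem hjmem, Finset.card_erase_of_mem hiS]
      omega
    obtain ⟨k, hk⟩ := Finset.card_pos.mp hcard2
    have hkj : k ≠ j := (Finset.mem_erase.mp hk).1
    have hki : k ≠ i := (Finset.mem_erase.mp (Finset.mem_erase.mp hk).2).1
    have hkS : k ∈ Finset.univ.filter fun i => 1 ≤ f i :=
      (Finset.mem_erase.mp (Finset.mem_erase.mp hk).2).2
    have hfi : 1 ≤ f i := (Finset.mem_filter.mp hiS).2
    have hfj : 1 ≤ f j := (Finset.mem_filter.mp hjS).2
    have hfk : 1 ≤ f k := (Finset.mem_filter.mp hkS).2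
    obtain ⟨x, hxm⟩ := Finset.card_pos.mp (by
      have h := hfi; simp only [hf] at h; omega :
      0 < (C.support.toFinset.filter fun w => G.Adj (vs i) w).card)
    obtain ⟨y, hym⟩ := Finset.card_pos.mp (by
      have h := hfj; simp only [hf] at h; omega :
      0 < (C.support.toFinset.filter fun w => G.Adj (vs j) w).card)
    obtain ⟨z, hzm⟩ := Finset.card_pos.mp (by
      have h := hfk; simp only [hf] at h; omega :
      0 < (C.support.toFinset.filter fun w => G.Adj (vs k) w).card)
    rw [hmem] at hxm hym hzm
    have hi5 := i.isLt
    have hj5 := j.isLt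
    have hk5 := k.isLt
    by_cases hxy : x = y
    · subst hxy
      have := KEY i j x x hxm.2 hym.2 (Or.inr hij) SimpleGraph.Walk.nil SimpleGraph.Walk.IsPath.nil
        (by intro t ht; rw [SimpleGraph.Walk.mem_support_nil_iff] at ht; subst ht; exact hxm.1)
      simp only [Nat.dist] at this
      simp only [SimpleGraph.Walk.length_nil] at this
      omega
    by_cases hxz : x = z
    · subst hxz
      have := KEY i k x x hxm.2 hzm.2 (Or.inr (Ne.symm hki)) SimpleGraph.Walk.nil
        SimpleGraph.Walk.IsPath.nil
        (by intro t ht; rw [SimpleGraph.Walk.mem_support_nil_iff] at ht; subst ht; exact hxm.1)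
      simp only [Nat.dist] at this
      simp only [SimpleGraph.Walk.length_nil] at this
      omega
    by_cases hyz : y = z
    · subst hyz
      have := KEY j k y y hym.2 hzm.2 (Or.inr (Ne.symm hkj)) SimpleGraph.Walk.nil
        SimpleGraph.Walk.IsPath.nil
        (by intro t ht; rw [SimpleGraph.Walk.mem_support_nil_iff] at ht; subst ht; exact hym.1)
      simp only [Nat.dist] at this
      simp only [SimpleGraph.Walk.length_nil] at this
      omega
    rcases arcs3 hC hxm.1 hym.1 hzm.1 hxy hxz hyz with
      ⟨A, B, E, hA, hB, hE, hAs, hBs, hEs, hsum3⟩ |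
      ⟨A, B, E, hA, hB, hE, hAs, hBs, hEs, hsum3⟩
    · have k1 := KEY j i y x hym.2 hxm.2 (Or.inl (Ne.symm hxy)) A hA hAs
      have k2 := KEY k j z y hzm.2 hym.2 (Or.inl (Ne.symm hyz)) B hB hBs
      have k3 := KEY i k x z hxm.2 hzm.2 (Or.inl hxz) E hE hEs
      simp only [Nat.dist] at k1 k2 k3
      omega
    · have k1 := KEY k i z x hzm.2 hxm.2 (Or.inl (Ne.symm hxz)) A hA hAs
      have k2 := KEY j k y z hym.2 hzm.2 (Or.inl hyz) B hB hBs
      have k3 := KEY i j x y hxm.2 hym.2 (Or.inl hxy) E hE hEs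
      simp only [Nat.dist] at k1 k2 k3
      omega
end

section
/- Let G be a critical multigraph on n vertices with χ'(G) ≥ Δ(G) + 2, and assume the Goldberg–Seymour theorem (χ' = Γ when χ' ≥ Δ+2). Then n is odd and for every vertex v, d_G(v) = Σ_{w ≠ v} (χ'(G) - 1 - d_G(w)) + 2; in particular δ(G) ≥ (n-1)(χ'(G) - 1 - Δ(G)) + 2. -/
open Classical Finset

/-- The degree of a vertex in a multigraph. -/
noncomputable def mdeg {V E : Type*} [Fintype E] (ends : E → Sym2 V) (v : V) : ℕ :=
  (univ.filter fun e => v ∈ ends e).card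

/-- The maximum degree of a multigraph. -/
noncomputable def mmaxDeg {V E : Type*} [Fintype V] [Fintype E] (ends : E → Sym2 V) : ℕ :=
  univ.sup (mdeg ends)

/-- The chromatic index of the subgraph of a multigraph on an edge set `F`:
the least `k` such that the edges in `F` can be properly colored with `k` colors. -/
noncomputable def chromIndexOn {V E : Type*} (ends : E → Sym2 V) (F : Finset E) : ℕ :=
  sInf {k | ∃ f : {e : E // e ∈ F} → Fin k,
    ∀ e₁ e₂, e₁ ≠ e₂ → (∃ v, v ∈ ends e₁.1 ∧ v ∈ ends e₂.1) → f e₁ ≠ f e₂}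

/-- The density `Γ(G)` of a multigraph. -/
noncomputable def density {V E : Type*} [Fintype V] [Fintype E] (ends : E → Sym2 V) : ℕ :=
  sSup {k : ℕ | ∃ (S : Finset V) (F : Finset E), Odd S.card ∧
    (∀ e ∈ F, ∀ v ∈ ends e, v ∈ S) ∧
    (k : ℤ) = ⌈(2 * F.card : ℚ) / ((S.card : ℚ) - 1)⌉}

lemma sym2_card_filter {V : Type*} [Fintype V] (z : Sym2 V) (h : ¬ z.IsDiag) :
    (univ.filter fun v => v ∈ z).card = 2 := by
  induction z using Sym2.ind with
  | _ a b =>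
    rw [Sym2.mk_isDiag_iff] at h
    have hs : (univ.filter fun v => v ∈ s(a, b)) = {a, b} := by
      ext v; simp [Sym2.mem_iff]
    rw [hs, card_pair h]

lemma handshake {V E : Type*} [Fintype V] [Fintype E] (ends : E → Sym2 V)
    (hl : ∀ e, ¬ (ends e).IsDiag) :
    ∑ v, (univ.filter fun e => v ∈ ends e).card = 2 * Fintype.card E := by
  simp_rw [card_filter]
  rw [Finset.sum_comm]
  have h2 : ∀ e : E, (∑ v : V, if v ∈ ends e then 1 else 0) = 2 := by
    intro e
    rw [← card_filter]
    exact sym2_card_filter _ (hl e)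
  rw [Finset.sum_congr rfl (fun e _ => h2 e)]
  simp [Finset.sum_const, Finset.card_univ, mul_comm]

lemma matching_bound {V E : Type*} [Fintype V] (ends : E → Sym2 V)
    (S : Finset V) (M : Finset E)
    (hM : ∀ e ∈ M, ∀ v ∈ ends e, v ∈ S)
    (hl : ∀ e ∈ M, ¬ (ends e).IsDiag)
    (hdisj : ∀ e₁ ∈ M, ∀ e₂ ∈ M, e₁ ≠ e₂ → ∀ v, v ∈ ends e₁ → v ∉ ends e₂) :
    2 * M.card ≤ S.card := by
  classical
  have hsub : M.biUnion (fun e => univ.filter fun v => v ∈ ends e) ⊆ S := by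
    intro v hv
    simp only [mem_biUnion, mem_filter] at hv
    obtain ⟨e, he, _, hv⟩ := hv
    exact hM e he v hv
  have hcard : (M.biUnion (fun e => univ.filter fun v => v ∈ ends e)).card = 2 * M.card := by
    rw [card_biUnion]
    · rw [Finset.sum_congr rfl fun e he => sym2_card_filter _ (hl e he)]
      simp [mul_comm]
    · intro e₁ h1 e₂ h2 hne
      rw [Function.onFun, Finset.disjoint_left]
      intro v hv1 hv2
      simp only [mem_filter] at hv1 hv2
      exact hdisj e₁ h1 e₂ h2 hne v hv1.2 hv2.2
  calc 2 * M.card = _ := hcard.symm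
    _ ≤ S.card := card_le_card hsub

lemma colorbound {V E : Type*} [Fintype V] (ends : E → Sym2 V)
    (hl : ∀ e, ¬ (ends e).IsDiag)
    (S : Finset V) (F : Finset E)
    (hSF : ∀ e ∈ F, ∀ v ∈ ends e, v ∈ S) (hodd : Odd S.card)
    (k : ℕ)
    (f : {e : E // e ∈ F} → Fin k)
    (hf : ∀ e₁ e₂, e₁ ≠ e₂ → (∃ v, v ∈ ends e₁.1 ∧ v ∈ ends e₂.1) → f e₁ ≠ f e₂) :
    2 * F.card ≤ k * (S.card - 1) := by
  classical
  obtain ⟨t, ht⟩ := hodd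
  have key : ∀ c : Fin k,
      2 * ((univ : Finset {e : E // e ∈ F}).filter (fun e => f e = c)).card ≤ S.card - 1 := by
    intro c
    set Mc := (((univ : Finset {e : E // e ∈ F}).filter (fun e => f e = c)).image
      (fun e => e.1) : Finset E) with hMcdef
    have hcardMc : Mc.card
        = ((univ : Finset {e : E // e ∈ F}).filter (fun e => f e = c)).card :=
      card_image_of_injective _ Subtype.val_injective
    have hb : 2 * Mc.card ≤ S.card := by
      apply matching_bound ends S Mc
      · intro e he v hv
        simp only [hMcdef, mem_image, mem_filter] at he
        obtain ⟨e', ⟨_, _⟩, rfl⟩ := he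
        exact hSF e'.1 e'.2 v hv
      · intro e _; exact hl e
      · intro e₁ h1 e₂ h2 hne v hv1 hv2
        simp only [hMcdef, mem_image, mem_filter] at h1 h2
        obtain ⟨a, ⟨_, ha⟩, rfl⟩ := h1
        obtain ⟨b, ⟨_, hb2⟩, rfl⟩ := h2
        have hab : a ≠ b := fun h => hne (by rw [h])
        exact hf a b hab ⟨v, hv1, hv2⟩ (by rw [ha, hb2])
    omega
  have hsum : F.card
      = ∑ c : Fin k, ((univ : Finset {e : E // e ∈ F}).filter (fun e => f e = c)).card := by
    rw [← Fintype.card_coe F, ← Finset.card_univ]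
    exact Finset.card_eq_sum_card_fiberwise (fun e _ => mem_univ (f e))
  calc 2 * F.card
      = ∑ c : Fin k, 2 * ((univ : Finset {e : E // e ∈ F}).filter (fun e => f e = c)).card := by
        rw [hsum, Finset.mul_sum]
    _ ≤ ∑ _c : Fin k, (S.card - 1) := Finset.sum_le_sum (fun c _ => key c)
    _ = k * (S.card - 1) := by simp [Finset.sum_const, mul_comm]

lemma colorSet_nonempty {V E : Type*} (ends : E → Sym2 V) (F : Finset E) :
    {k | ∃ f : {e : E // e ∈ F} → Fin k,
      ∀ e₁ e₂, e₁ ≠ e₂ → (∃ v, v ∈ ends e₁.1 ∧ v ∈ ends e₂.1) → f e₁ ≠ f e₂}.Nonempty := by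
  classical
  refine ⟨F.card, (Fintype.equivFinOfCardEq (Fintype.card_coe F) : _), ?_⟩
  intro e₁ e₂ hne _
  exact (Equiv.injective _).ne hne

lemma chrom_bound {V E : Type*} [Fintype V] (ends : E → Sym2 V)
    (hl : ∀ e, ¬ (ends e).IsDiag)
    (S : Finset V) (F : Finset E)
    (hSF : ∀ e ∈ F, ∀ v ∈ ends e, v ∈ S) (hodd : Odd S.card) :
    2 * F.card ≤ chromIndexOn ends F * (S.card - 1) := by
  obtain ⟨f, hf⟩ := Nat.sInf_mem (colorSet_nonempty ends F)
  exact colorbound ends hl S F hSF hodd _ f hf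

lemma chrom_mono {V E : Type*} (ends : E → Sym2 V) {F F' : Finset E} (h : F ⊆ F') :
    chromIndexOn ends F ≤ chromIndexOn ends F' := by
  obtain ⟨f, hf⟩ := Nat.sInf_mem (colorSet_nonempty ends F')
  apply Nat.sInf_le
  refine ⟨fun e => f ⟨e.1, h e.2⟩, ?_⟩
  intro e₁ e₂ hne hv
  refine hf _ _ (fun heq => ?_) hv
  have h2 : e₁.1 = e₂.1 := congrArg (Subtype.val : {e : _ // e ∈ F'} → _) heq
  exact hne (Subtype.ext h2)

lemma exists_two_mem {V : Type*} (z : Sym2 V) (h : ¬ z.IsDiag) :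
    ∃ a b, a ≠ b ∧ a ∈ z ∧ b ∈ z := by
  induction z using Sym2.ind with
  | _ a b => exact ⟨a, b, by simpa [Sym2.mk_isDiag_iff] using h, by simp, by simp⟩

/-- Let `G` be a critical multigraph on `n` vertices with `χ'(G) ≥ Δ(G) + 2` and assume
the Goldberg–Seymour theorem `χ'(G) = Γ(G)`. Then `n` is odd, and for every vertex `v`,
`d_G(v) = Σ_{w ≠ v} (χ'(G) - 1 - d_G(w)) + 2`; in particular every vertex has degree at
least `(n-1)(χ'(G) - 1 - Δ(G)) + 2`. -/
theorem stmt10 {V E : Type*} [Fintype V] [Fintype E] (ends : E → Sym2 V)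
    (hloopless : ∀ e, ¬ (ends e).IsDiag)
    (hcrit : ∀ (S : Finset V) (F : Finset E), (∀ e ∈ F, ∀ v ∈ ends e, v ∈ S) →
      (S ≠ univ ∨ F ≠ univ) →
      chromIndexOn ends F < chromIndexOn ends (univ : Finset E))
    (hchi : mmaxDeg ends + 2 ≤ chromIndexOn ends (univ : Finset E))
    (hGS : chromIndexOn ends (univ : Finset E) = density ends) :
    Odd (Fintype.card V) ∧
      (∀ v : V, (mdeg ends v : ℤ)
        = (∑ w ∈ univ.erase v,
            ((chromIndexOn ends (univ : Finset E) : ℤ) - 1 - mdeg ends w)) + 2) ∧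
      (∀ v : V, ((Fintype.card V : ℤ) - 1)
          * ((chromIndexOn ends (univ : Finset E) : ℤ) - 1 - mmaxDeg ends) + 2
        ≤ (mdeg ends v : ℤ)) := by
  classical
  set c := chromIndexOn ends (univ : Finset E) with hcdef
  have hc2 : 2 ≤ c := by omega
  -- the density set
  set DS : Set ℕ := {k : ℕ | ∃ (S : Finset V) (F : Finset E), Odd S.card ∧
    (∀ e ∈ F, ∀ v ∈ ends e, v ∈ S) ∧
    (k : ℤ) = ⌈(2 * F.card : ℚ) / ((S.card : ℚ) - 1)⌉} with hDSdef
  have hdens : density ends = sSup DS := rfl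
  have hDSne : DS.Nonempty := by
    by_contra h
    rw [Set.not_nonempty_iff_eq_empty] at h
    have h0 : density ends = 0 := by rw [hdens, h, csSup_empty]; rfl
    omega
  have hbdd : ∀ k ∈ DS, k ≤ c := by
    rintro k ⟨S, F, hodd, hSF, hk⟩
    rcases F.eq_empty_or_nonempty with rfl | ⟨e, he⟩
    · have hk0 : (k : ℤ) = 0 := by simpa using hk
      have : k = 0 := by exact_mod_cast hk0
      omega
    · have hS2 : 2 ≤ S.card := by
        obtain ⟨a, b, hab, ha, hb⟩ := exists_two_mem _ (hloopless e)
        have hsub : ({a, b} : Finset V) ⊆ S := by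
          intro x hx
          simp only [mem_insert, mem_singleton] at hx
          rcases hx with rfl | rfl
          exacts [hSF e he x ha, hSF e he x hb]
        calc 2 = ({a, b} : Finset V).card := (card_pair hab).symm
          _ ≤ S.card := card_le_card hsub
      have h1 : 2 * F.card ≤ c * (S.card - 1) :=
        le_trans (chrom_bound ends hloopless S F hSF hodd)
          (Nat.mul_le_mul_right _ (chrom_mono ends (subset_univ F)))
      have hpos : (0 : ℚ) < (S.card : ℚ) - 1 := by
        have : (2 : ℚ) ≤ (S.card : ℚ) := by exact_mod_cast hS2
        linarith
      have h1Q : (2 : ℚ) * F.card ≤ (c : ℚ) * ((S.card : ℚ) - 1) := by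
        have h1' : ((2 * F.card : ℕ) : ℚ) ≤ ((c * (S.card - 1) : ℕ) : ℚ) := by
          exact_mod_cast h1
        rw [Nat.cast_mul, Nat.cast_mul, Nat.cast_sub (by omega : 1 ≤ S.card)] at h1'
        push_cast at h1' ⊢
        linarith
      have hkc : (k : ℤ) ≤ (c : ℤ) := by
        rw [hk, Int.ceil_le, div_le_iff₀ hpos]
        push_cast
        exact h1Q
      exact_mod_cast hkc
  have hsup := Nat.sSup_mem hDSne ⟨c, hbdd⟩
  rw [← hdens, ← hGS] at hsup
  obtain ⟨S, F, hodd, hSF, hck⟩ := hsup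
  -- F nonempty
  have hFne : F.Nonempty := by
    rcases F.eq_empty_or_nonempty with rfl | h
    · exfalso
      have hk0 : (c : ℤ) = 0 := by simpa using hck
      have : c = 0 := by exact_mod_cast hk0
      omega
    · exact h
  obtain ⟨e, he⟩ := hFne
  have hS2 : 2 ≤ S.card := by
    obtain ⟨a, b, hab, ha, hb⟩ := exists_two_mem _ (hloopless e)
    have hsub : ({a, b} : Finset V) ⊆ S := by
      intro x hx
      simp only [mem_insert, mem_singleton] at hx
      rcases hx with rfl | rfl
      exacts [hSF e he x ha, hSF e he x hb]
    calc 2 = ({a, b} : Finset V).card := (card_pair hab).symm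
      _ ≤ S.card := card_le_card hsub
  have hposS : (0 : ℚ) < (S.card : ℚ) - 1 := by
    have : (2 : ℚ) ≤ (S.card : ℚ) := by exact_mod_cast hS2
    linarith
  -- S = univ and F = univ
  have hSU : S = univ ∧ F = univ := by
    by_contra h
    rw [not_and_or] at h
    have hlt := hcrit S F hSF h
    have hge : c ≤ chromIndexOn ends F := by
      have h1 : 2 * F.card ≤ chromIndexOn ends F * (S.card - 1) :=
        chrom_bound ends hloopless S F hSF hodd
      have h1Q : (2 : ℚ) * F.card ≤ (chromIndexOn ends F : ℚ) * ((S.card : ℚ) - 1) := by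
        have h1' : ((2 * F.card : ℕ) : ℚ) ≤ ((chromIndexOn ends F * (S.card - 1) : ℕ) : ℚ) := by
          exact_mod_cast h1
        rw [Nat.cast_mul, Nat.cast_mul, Nat.cast_sub (by omega : 1 ≤ S.card)] at h1'
        push_cast at h1' ⊢
        linarith
      have : (c : ℤ) ≤ (chromIndexOn ends F : ℤ) := by
        rw [hck, Int.ceil_le, div_le_iff₀ hposS]
        push_cast
        exact h1Q
      exact_mod_cast this
    omega
  obtain ⟨rfl, rfl⟩ := hSU
  set n := Fintype.card V with hndef
  set m := Fintype.card E with hmdef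
  have hcardV : (univ : Finset V).card = n := card_univ
  have hcardE : (univ : Finset E).card = m := card_univ
  rw [hcardV] at hodd hck hS2 hposS
  rw [hcardE] at hck
  have hoddn : Odd n := hodd
  -- upper bound 2m ≤ c(n-1)
  have hup : (2 * m : ℤ) ≤ (c : ℤ) * ((n : ℤ) - 1) := by
    have hQ0 : (2 * (m : ℚ)) / ((n : ℚ) - 1) ≤ ((c : ℤ) : ℚ) :=
      Int.ceil_le.mp (le_of_eq hck.symm)
    rw [div_le_iff₀ hposS] at hQ0
    push_cast at hQ0
    exact_mod_cast hQ0
  -- lower bound (c-1)(n-1) < 2m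
  have hlow : ((c : ℤ) - 1) * ((n : ℤ) - 1) < (2 * m : ℤ) := by
    have hQ : ((c : ℚ) - 1) < (2 * m : ℚ) / ((n : ℚ) - 1) := by
      have := Int.lt_ceil.mp (by rw [← hck]; omega :
        ((c : ℤ) - 1) < ⌈(2 * (m : ℚ)) / ((n : ℚ) - 1)⌉)
      push_cast at this ⊢
      linarith
    rw [lt_div_iff₀ hposS] at hQ
    exact_mod_cast hQ
  -- edge removal upper bound: 2m ≤ (c-1)(n-1) + 2
  have hm1 : 1 ≤ m := by
    have h0 : 0 < (univ : Finset E).card := card_pos.mpr ⟨e, mem_univ e⟩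
    omega
  have hup2 : (2 * m : ℤ) ≤ ((c : ℤ) - 1) * ((n : ℤ) - 1) + 2 := by
    set F' : Finset E := univ.erase e with hF'def
    have hne' : F' ≠ univ := by
      intro h
      have h1 : e ∉ F' := notMem_erase e univ
      rw [h] at h1
      exact h1 (mem_univ e)
    have hlt := hcrit univ F' (fun e _ v _ => mem_univ v) (Or.inr hne')
    have hb' : 2 * F'.card ≤ chromIndexOn ends F' * ((univ : Finset V).card - 1) :=
      chrom_bound ends hloopless univ F' (fun e _ v _ => mem_univ v)
        (by rw [hcardV]; exact hoddn)
    rw [hcardV] at hb'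
    have hcF' : F'.card = m - 1 := by
      rw [hF'def, card_erase_of_mem (mem_univ e), hcardE]
    rw [hcF'] at hb'
    have hchF' : chromIndexOn ends F' ≤ c - 1 := by omega
    have hb'' : 2 * (m - 1) ≤ (c - 1) * (n - 1) :=
      le_trans hb' (Nat.mul_le_mul_right _ hchF')
    have hZ : ((2 * (m - 1) : ℕ) : ℤ) ≤ (((c - 1) * (n - 1) : ℕ) : ℤ) := by
      exact_mod_cast hb''
    rw [Nat.cast_mul, Nat.cast_mul, Nat.cast_sub (by omega : 1 ≤ m),
      Nat.cast_sub (by omega : 1 ≤ c), Nat.cast_sub (by omega : 1 ≤ n)] at hZ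
    push_cast at hZ
    linarith
  -- exact value of 2m
  obtain ⟨t, htn⟩ := id hoddn
  have h2t : ((n : ℤ) - 1) = 2 * (t : ℤ) := by
    have : (n : ℤ) = 2 * t + 1 := by exact_mod_cast htn
    omega
  have hm2 : (2 * m : ℤ) = ((c : ℤ) - 1) * ((n : ℤ) - 1) + 2 := by
    rw [h2t] at hlow hup2 ⊢
    have hr1 : ((c : ℤ) - 1) * (2 * (t : ℤ)) = 2 * (((c : ℤ) - 1) * t) := by ring
    rw [hr1] at hlow hup2 ⊢
    set B : ℤ := ((c : ℤ) - 1) * (t : ℤ) with hB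
    omega
  -- handshake
  have hhs : ∑ v, mdeg ends v = 2 * m := handshake ends hloopless
  have hhsZ : ∑ v, (mdeg ends v : ℤ) = 2 * (m : ℤ) := by exact_mod_cast hhs
  have hcarde : ∀ v : V, (((univ : Finset V).erase v).card : ℤ) = (n : ℤ) - 1 := by
    intro v
    rw [card_erase_of_mem (mem_univ v), hcardV]
    have hn1 : 1 ≤ n := by omega
    push_cast [Nat.cast_sub hn1]
    ring
  have part2 : ∀ v : V, (mdeg ends v : ℤ)
      = (∑ w ∈ univ.erase v, ((c : ℤ) - 1 - mdeg ends w)) + 2 := by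
    intro v
    have hsplit : (mdeg ends v : ℤ) + ∑ w ∈ univ.erase v, (mdeg ends w : ℤ)
        = ∑ w, (mdeg ends w : ℤ) :=
      Finset.add_sum_erase _ (fun w => (mdeg ends w : ℤ)) (mem_univ v)
    have hsumrw : ∑ w ∈ univ.erase v, ((c : ℤ) - 1 - (mdeg ends w : ℤ))
        = ((n : ℤ) - 1) * ((c : ℤ) - 1) - ∑ w ∈ univ.erase v, (mdeg ends w : ℤ) := by
      rw [Finset.sum_sub_distrib, Finset.sum_const, nsmul_eq_mul, hcarde v]
    rw [hsumrw]
    linarith [hhsZ, hsplit, hm2]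
  refine ⟨hoddn, part2, ?_⟩
  intro v
  have hterm : ∀ w ∈ univ.erase v, ((c : ℤ) - 1 - (mmaxDeg ends : ℤ)) ≤ (c : ℤ) - 1 - (mdeg ends w : ℤ) := by
    intro w _
    have h1 : mdeg ends w ≤ mmaxDeg ends := Finset.le_sup (mem_univ w)
    have h2 : (mdeg ends w : ℤ) ≤ (mmaxDeg ends : ℤ) := by exact_mod_cast h1
    linarith
  have hsum_le := Finset.sum_le_sum hterm
  rw [Finset.sum_const, nsmul_eq_mul, hcarde v] at hsum_le
  have := part2 v
  linarith
end

section
/- Let G be a simple graph with girth at least 5 on 11 vertices that is the edge-disjoint union (as a vertex partition) of a 5-cycle C₁ = x₁x₂x₃x₄x₅ and a 6-cycle C₂ = y₁...y₆ together with edges between them, such that C₁ is a shortest cycle. Then some vertex of C₂ has no neighbor on C₁; in particular δ(G) ≤ 2 fails to reach 3, i.e., G has a vertex of degree at most 2. -/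
open Classical Finset

section helpers
variable {V : Type*} {G : SimpleGraph V}

lemma girth_le_of_cycle {a : V} (w : G.Walk a a) (hw : w.IsCycle) :
    G.girth ≤ w.length := by
  have h : G.egirth ≤ w.length := SimpleGraph.le_egirth.mp le_rfl a w hw
  have := ENat.toNat_le_toNat h (by simp)
  simpa [SimpleGraph.girth] using this

lemma noTri (hg : 5 ≤ G.girth) {a b c : V} (hab : G.Adj a b) (hbc : G.Adj b c)
    (hca : G.Adj c a) : False := by
  have hcyc : (SimpleGraph.Walk.cons hab (.cons hbc (.cons hca .nil))).IsCycle := by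
    simp [SimpleGraph.Walk.isCycle_def, SimpleGraph.Walk.isTrail_def, hab.ne, hbc.ne, hca.ne,
      hab.ne', hbc.ne', hca.ne', Sym2.eq_iff]
  have := girth_le_of_cycle _ hcyc
  simp at this
  omega

lemma noQuad (hg : 5 ≤ G.girth) {a b c d : V} (hac : a ≠ c) (hbd : b ≠ d)
    (hab : G.Adj a b) (hbc : G.Adj b c) (hcd : G.Adj c d) (hda : G.Adj d a) : False := by
  have hcyc : (SimpleGraph.Walk.cons hab (.cons hbc (.cons hcd (.cons hda .nil)))).IsCycle := by
    simp [SimpleGraph.Walk.isCycle_def, SimpleGraph.Walk.isTrail_def, hab.ne, hbc.ne, hcd.ne,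
      hda.ne, hab.ne', hbc.ne', hcd.ne', hda.ne', hac, hbd, hac.symm, hbd.symm, Sym2.eq_iff]
  have := girth_le_of_cycle _ hcyc
  simp at this
  omega

end helpers

set_option maxRecDepth 4000 in
/-- Let `G` be a simple graph with girth at least `5` on `11` vertices whose vertex set
is partitioned into a `5`-cycle `C₁ = x₁…x₅` and a `6`-cycle `C₂ = y₁…y₆` (with
arbitrary further edges between them). Then some vertex of `C₂` has no neighbor on
`C₁`; in particular `G` has a vertex of degree at most `2`. -/
theorem stmt13 {V : Type*} [Fintype V] (G : SimpleGraph V) [DecidableRel G.Adj]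
    (hcard : Fintype.card V = 11) (hgirth : 5 ≤ G.girth)
    (x : Fin 5 → V) (y : Fin 6 → V)
    (hxinj : Function.Injective x) (hyinj : Function.Injective y)
    (hxy : ∀ i j, x i ≠ y j)
    (hcover : ∀ v : V, (∃ i, v = x i) ∨ (∃ j, v = y j))
    (hC1 : ∀ i : Fin 5, G.Adj (x i) (x (i + 1)))
    (hC2 : ∀ j : Fin 6, G.Adj (y j) (y (j + 1))) :
    (∃ j : Fin 6, ∀ i : Fin 5, ¬ G.Adj (y j) (x i)) ∧ (∃ v : V, G.degree v ≤ 2) := by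
  have key : ∃ j : Fin 6, ∀ i : Fin 5, ¬ G.Adj (y j) (x i) := by
    by_contra h
    push_neg at h
    choose f hf using h
    have hstep : ∀ j : Fin 6, f (j + 1) = f j + 2 ∨ f (j + 1) = f j + 3 := by
      intro j
      have h1 := hf j
      have h2 := hf (j + 1)
      obtain ⟨d, hd⟩ : ∃ d, f (j + 1) = f j + d := ⟨f (j + 1) - f j, (add_sub_cancel _ _).symm⟩
      rw [hd] at h2 ⊢
      rcases (by decide : ∀ d : Fin 5, d = 0 ∨ d = 1 ∨ d = 2 ∨ d = 3 ∨ d = 4) d with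
        rfl | rfl | rfl | rfl | rfl
      · rw [add_zero] at h2
        exact (noTri hgirth h1 h2.symm (hC2 j).symm).elim
      · exact (noQuad hgirth (hxy (f j + 1) j).symm (hxy (f j) (j + 1))
          h1 (hC1 (f j)) h2.symm (hC2 j).symm).elim
      · left; rfl
      · right; rfl
      · exfalso
        have hb : G.Adj (x (f j)) (x (f j + 4)) := by
          have := hC1 (f j + 4)
          rw [(by decide : ∀ a : Fin 5, a + 4 + 1 = a) (f j)] at this
          exact this.symm
        exact noQuad hgirth (hxy (f j + 4) j).symm (hxy (f j) (j + 1))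
          h1 hb h2.symm (hC2 j).symm
    have hskip : ∀ j : Fin 6, f (j + 2) ≠ f j := by
      intro j heq
      have h1 := hf j
      have h2 := hf (j + 2)
      rw [heq] at h2
      have hc : G.Adj (y (j + 2)) (y (j + 1)) := by
        have := hC2 (j + 1)
        rw [(by decide : ∀ j : Fin 6, j + 1 + 1 = j + 2) j] at this
        exact this.symm
      exact noQuad hgirth (hyinj.ne ((by decide : ∀ j : Fin 6, j ≠ j + 2) j))
        (hxy (f j) (j + 1)) h1 h2.symm hc (hC2 j).symm
    have main : ∀ a0 a1 a2 a3 a4 a5 : Fin 5,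
        (a1 = a0 + 2 ∨ a1 = a0 + 3) → (a2 = a1 + 2 ∨ a2 = a1 + 3) →
        (a3 = a2 + 2 ∨ a3 = a2 + 3) → (a4 = a3 + 2 ∨ a4 = a3 + 3) →
        (a5 = a4 + 2 ∨ a5 = a4 + 3) → (a0 = a5 + 2 ∨ a0 = a5 + 3) →
        a2 ≠ a0 → a3 ≠ a1 → a4 ≠ a2 → a5 ≠ a3 → a0 ≠ a4 → a1 ≠ a5 → False := by decide
    exact main (f 0) (f 1) (f 2) (f 3) (f 4) (f 5) (hstep 0) (hstep 1) (hstep 2) (hstep 3)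
      (hstep 4) (hstep 5) (hskip 0) (hskip 1) (hskip 2) (hskip 3) (hskip 4) (hskip 5)
  obtain ⟨j, hj⟩ := key
  refine ⟨⟨j, hj⟩, ⟨y j, ?_⟩⟩
  have hsub : G.neighborFinset (y j) ⊆ {y (j + 1), y (j + 5)} := by
    intro v hv
    rw [SimpleGraph.mem_neighborFinset] at hv
    rcases hcover v with ⟨i, rfl⟩ | ⟨k, rfl⟩
    · exact absurd hv (hj i)
    · obtain ⟨d, hd⟩ : ∃ d, k = j + d := ⟨k - j, (add_sub_cancel _ _).symm⟩
      subst hd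
      rcases (by decide : ∀ d : Fin 6, d = 0 ∨ d = 1 ∨ d = 2 ∨ d = 3 ∨ d = 4 ∨ d = 5) d with
        rfl | rfl | rfl | rfl | rfl | rfl
      · rw [add_zero] at hv
        exact absurd hv (G.irrefl)
      · simp
      · exfalso
        have hb : G.Adj (y (j + 1)) (y (j + 2)) := by
          have := hC2 (j + 1)
          rwa [(by decide : ∀ j : Fin 6, j + 1 + 1 = j + 2) j] at this
        exact noTri hgirth (hC2 j) hb hv.symm
      · exfalso
        have hb : G.Adj (y (j + 1)) (y (j + 2)) := by
          have := hC2 (j + 1)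
          rwa [(by decide : ∀ j : Fin 6, j + 1 + 1 = j + 2) j] at this
        have hc : G.Adj (y (j + 2)) (y (j + 3)) := by
          have := hC2 (j + 2)
          rwa [(by decide : ∀ j : Fin 6, j + 2 + 1 = j + 3) j] at this
        exact noQuad hgirth (hyinj.ne ((by decide : ∀ j : Fin 6, j ≠ j + 2) j))
          (hyinj.ne ((by decide : ∀ j : Fin 6, j + 1 ≠ j + 3) j))
          (hC2 j) hb hc hv.symm
      · exfalso
        have hb : G.Adj (y (j + 4)) (y (j + 5)) := by
          have := hC2 (j + 4)
          rwa [(by decide : ∀ j : Fin 6, j + 4 + 1 = j + 5) j] at this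
        have hc : G.Adj (y (j + 5)) (y j) := by
          have := hC2 (j + 5)
          rwa [(by decide : ∀ j : Fin 6, j + 5 + 1 = j) j] at this
        exact noTri hgirth hb hc hv
      · simp
  have h2 : ({y (j + 1), y (j + 5)} : Finset V).card ≤ 2 :=
    (Finset.card_insert_le _ _).trans (by simp)
  exact le_trans (Finset.card_le_card hsub) h2
end

section
/- Let T be a tree which is the union of t ≥ 2 internally disjoint paths P₁,...,P_t from a common vertex v₀ to distinct vertices x₁,...,x_t on a cycle C, where all internal vertices of the paths avoid C, and suppose every cycle of the graph T ∪ C has length at least |C|. Then |V(T) \ V(C)| ≥ (t-1)|C|/2 - (t-1). -/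
open Classical Finset

section AuxLemmas

open SimpleGraph Walk

variable {V : Type*} {G : SimpleGraph V}

lemma aux_end_mem_tail {u v : V} (p : G.Walk u v) (hp : ¬ p.Nil) : v ∈ p.support.tail := by
  cases p with
  | nil => simp at hp
  | cons h q => simpa using q.end_mem_support

lemma aux_mem_tail {u : V} (p : G.Walk u u) (hp : ¬ p.Nil) {v : V} :
    v ∈ p.support ↔ v ∈ p.support.tail := by
  constructor
  · intro h
    rw [support_eq_cons, List.mem_cons] at h
    rcases h with rfl | h
    · exact aux_end_mem_tail p hp
    · exact h
  · intro h
    rw [support_eq_cons]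
    exact List.mem_cons_of_mem _ h

lemma aux_mid_path {r a b : V} (K : G.Walk r r) (hK : K.IsCycle)
    (pre : G.Walk r a) (mid : G.Walk a b) (post : G.Walk b r)
    (hfac : pre.append (mid.append post) = K) (hab : a ≠ b) : mid.IsPath := by
  have hnd : K.support.tail.Nodup := hK.2
  have htl : K.support.tail =
      pre.support.tail ++ (mid.support.tail ++ post.support.tail) := by
    rw [← hfac, tail_support_append, tail_support_append]
  rw [htl] at hnd
  rw [List.nodup_append] at hnd
  obtain ⟨h1, h2, h3⟩ := hnd
  rw [List.nodup_append] at h2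
  obtain ⟨h21, h22, h23⟩ := h2
  rw [isPath_def, support_eq_cons, List.nodup_cons]
  refine ⟨?_, h21⟩
  intro hmem
  by_cases hpre : pre.Nil
  · have hra : r = a := hpre.eq
    have hpost : ¬ post.Nil := by
      intro h
      exact hab (hra ▸ h.eq.symm)
    have : a ∈ post.support.tail := hra ▸ aux_end_mem_tail post hpost
    exact h23 a hmem a this rfl
  · have : a ∈ pre.support.tail := aux_end_mem_tail pre hpre
    exact h3 a this a (List.mem_append_left _ hmem) rfl

lemma aux_cycle_of_paths {c v₀ a b : V} {C : G.Walk c c}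
    (hv₀ : v₀ ∉ C.support) (ha : a ∈ C.support) (hab : a ≠ b)
    (Pa : G.Walk v₀ a) (Pb : G.Walk v₀ b) (hPa : Pa.IsPath) (hPb : Pb.IsPath)
    (hPaC : ∀ v ∈ Pa.support, v ∈ C.support → v = a)
    (hPbC : ∀ v ∈ Pb.support, v ∈ C.support → v = b)
    (hdisj : ∀ v ∈ Pa.support, v ∈ Pb.support → v = v₀)
    (arc : G.Walk a b) (harc : arc.IsPath)
    (hsub : ∀ v ∈ arc.support, v ∈ C.support) :
    (Pa.append (arc.append Pb.reverse)).IsCycle := by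
  have hav : v₀ ≠ a := fun h => hv₀ (h ▸ ha)
  rw [isCycle_def]
  refine ⟨?_, ?_, ?_⟩
  · -- trail
    have hPaarc : ∀ e ∈ Pa.edges, e ∉ arc.edges := by
      intro e he ha'
      induction e using Sym2.ind with
      | _ u v =>
        have hne : u ≠ v := (G.mem_edgeSet.mp (Pa.edges_subset_edgeSet he)).ne
        exact hne (((hPaC u (Pa.fst_mem_support_of_mem_edges he)
            (hsub u (arc.fst_mem_support_of_mem_edges ha')))).trans
          ((hPaC v (Pa.snd_mem_support_of_mem_edges he)
            (hsub v (arc.snd_mem_support_of_mem_edges ha')))).symm)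
    have hPaPb : ∀ e ∈ Pa.edges, e ∉ Pb.edges := by
      intro e he ha'
      induction e using Sym2.ind with
      | _ u v =>
        have hne : u ≠ v := (G.mem_edgeSet.mp (Pa.edges_subset_edgeSet he)).ne
        exact hne (((hdisj u (Pa.fst_mem_support_of_mem_edges he)
            (Pb.fst_mem_support_of_mem_edges ha'))).trans
          ((hdisj v (Pa.snd_mem_support_of_mem_edges he)
            (Pb.snd_mem_support_of_mem_edges ha'))).symm)
    have harcPb : ∀ e ∈ arc.edges, e ∉ Pb.edges := by
      intro e he ha'
      induction e using Sym2.ind with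
      | _ u v =>
        have hne : u ≠ v := (G.mem_edgeSet.mp (arc.edges_subset_edgeSet he)).ne
        exact hne (((hPbC u (Pb.fst_mem_support_of_mem_edges ha')
            (hsub u (arc.fst_mem_support_of_mem_edges he)))).trans
          ((hPbC v (Pb.snd_mem_support_of_mem_edges ha')
            (hsub v (arc.snd_mem_support_of_mem_edges he)))).symm)
    rw [isTrail_def, edges_append, edges_append, edges_reverse]
    rw [List.nodup_append, List.nodup_append]
    refine ⟨hPa.isTrail.edges_nodup,
      ⟨harc.isTrail.edges_nodup, List.nodup_reverse.mpr hPb.isTrail.edges_nodup, ?_⟩, ?_⟩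
    · rintro e he _ he' rfl
      exact harcPb e he (List.mem_reverse.mp he')
    · rintro e he _ he' rfl
      rcases List.mem_append.mp he' with h | h
      · exact hPaarc e he h
      · exact hPaPb e he (List.mem_reverse.mp h)
  · -- ne nil
    intro hD
    have h0 := congrArg Walk.length hD
    rw [length_append, length_append] at h0
    have : ¬ Pa.Nil := not_nil_of_ne hav
    rw [nil_iff_length_eq] at this
    simp only [length_reverse, length_nil] at h0
    omega
  · -- support tail nodup
    have hst : (Pa.append (arc.append Pb.reverse)).support.tail =
        Pa.support.tail ++ (arc.support.tail ++ Pb.reverse.support.tail) := by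
      rw [tail_support_append, tail_support_append]
    rw [hst, List.nodup_append, List.nodup_append]
    have harcnd := harc.support_nodup
    have hPbrevnd : Pb.reverse.support.Nodup := by
      rw [support_reverse, List.nodup_reverse]; exact hPb.support_nodup
    have hana : a ∉ arc.support.tail := by
      have := harcnd
      rw [support_eq_cons, List.nodup_cons] at this
      exact this.1
    have hbnb : b ∉ Pb.reverse.support.tail := by
      have := hPbrevnd
      rw [support_eq_cons (p := Pb.reverse), List.nodup_cons] at this
      exact this.1
    have hv₀na : v₀ ∉ Pa.support.tail := by
      have := hPa.support_nodup
      rw [support_eq_cons, List.nodup_cons] at this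
      exact this.1
    refine ⟨hPa.support_nodup.tail, ⟨harcnd.tail, hPbrevnd.tail, ?_⟩, ?_⟩
    · -- arc tail vs Pb.rev tail
      rintro v hv _ hv' rfl
      have hvb : v = b := hPbC v (by
          have : v ∈ Pb.reverse.support := List.mem_of_mem_tail hv'
          rwa [support_reverse, List.mem_reverse] at this)
        (hsub v (List.mem_of_mem_tail hv))
      exact hbnb (hvb ▸ hv')
    · rintro v hv _ hv' rfl
      have hvPa : v ∈ Pa.support := List.mem_of_mem_tail hv
      rcases List.mem_append.mp hv' with h | h
      · have hva : v = a := hPaC v hvPa (hsub v (List.mem_of_mem_tail h))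
        exact hana (hva ▸ h)
      · have hvPb : v ∈ Pb.support := by
          have : v ∈ Pb.reverse.support := List.mem_of_mem_tail h
          rwa [support_reverse, List.mem_reverse] at this
        have : v = v₀ := hdisj v hvPa hvPb
        exact hv₀na (this ▸ hv)

end AuxLemmas

/-- Let `T` be a `t`-fan (`t ≥ 2`): a union of `t` pairwise internally disjoint paths
`P₁, …, P_t` from a common vertex `v₀ ∉ V(C)` to distinct vertices `x₁, …, x_t` of a
cycle `C`, with all internal vertices avoiding `C`. If every cycle of the graph `T ∪ C`
has length at least `|C|`, then `|V(T) \ V(C)| ≥ (t-1)|C|/2 - (t-1)`. -/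
theorem stmt14 {V : Type*} [Fintype V] (G : SimpleGraph V) (c : V) (C : G.Walk c c)
    (hC : C.IsCycle) (t : ℕ) (ht : 2 ≤ t) (v₀ : V) (hv₀ : v₀ ∉ C.support)
    (x : Fin t → V) (hxinj : Function.Injective x) (hx : ∀ i, x i ∈ C.support)
    (P : (i : Fin t) → G.Walk v₀ (x i)) (hP : ∀ i, (P i).IsPath)
    (hinternal : ∀ i, ∀ u ∈ (P i).support, u ≠ x i → u ∉ C.support)
    (hdisj : ∀ i j, i ≠ j →
      ∀ u, u ∈ (P i).support → u ∈ (P j).support → u = v₀)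
    (hgirth : ∀ (u : V) (w : G.Walk u u), w.IsCycle →
      (∀ e ∈ w.edges, e ∈ C.edges ∨ ∃ i, e ∈ (P i).edges) → C.length ≤ w.length) :
    ((t : ℚ) - 1) * C.length / 2 - ((t : ℚ) - 1) ≤
      ((univ.filter fun v : V =>
        (∃ i, v ∈ (P i).support) ∧ v ∉ C.support).card : ℚ) := by
  classical
  open SimpleGraph Walk in
  obtain ⟨n, hn⟩ : ∃ m, C.length = m := ⟨_, rfl⟩
  have hCnil : ¬ C.Nil := hC.not_nil
  have i₀ : Fin t := ⟨0, by omega⟩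
  obtain ⟨r₀, hr₀⟩ : ∃ r, r = x i₀ := ⟨_, rfl⟩
  have hr₀mem : r₀ ∈ C.support := hr₀ ▸ hx i₀
  obtain ⟨C', hC'def⟩ : ∃ K : G.Walk r₀ r₀, K = C.rotate r₀ hr₀mem := ⟨_, rfl⟩
  have hC' : C'.IsCycle := by rw [hC'def]; exact hC.rotate _
  have hC'nil : ¬ C'.Nil := hC'.not_nil
  have hlenC' : C'.length = n := by
    have h := congrArg Walk.length (C.take_spec hr₀mem)
    rw [Walk.length_append] at h
    rw [hC'def]
    simp only [Walk.rotate, Walk.length_append]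
    omega
  have hsup : ∀ v, v ∈ C'.support ↔ v ∈ C.support := by
    intro v
    rw [aux_mem_tail C' hC'nil, aux_mem_tail C hCnil, hC'def]
    exact (Walk.support_rotate C r₀ hr₀mem).perm.mem_iff
  have hedg : ∀ e, e ∈ C'.edges ↔ e ∈ C.edges := by
    intro e
    rw [hC'def]
    exact (Walk.rotate_edges C r₀ hr₀mem).perm.mem_iff
  -- the length function on the x-vertices
  obtain ⟨f, hfdef⟩ : ∃ g : V → ℕ,
      g = fun v => ∑ i : Fin t, if x i = v then (P i).length else 0 := ⟨_, rfl⟩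
  have hfx : ∀ i, f (x i) = (P i).length := by
    intro i
    rw [hfdef]
    dsimp only
    rw [Finset.sum_eq_single_of_mem i (Finset.mem_univ i)
      (fun j _ hji => if_neg fun h => hji (hxinj h)), if_pos rfl]
  -- girth step
  have girthstep : ∀ (y z : V) (iy iz : Fin t), y = x iy → z = x iz → y ≠ z →
      ∀ (arc : G.Walk y z), arc.IsPath → (∀ v ∈ arc.support, v ∈ C.support) →
      (∀ e ∈ arc.edges, e ∈ C.edges) → n ≤ f y + f z + arc.length := by
    intro y z iy iz hy hz hne arc harc hs he
    subst hy; subst hz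
    have hPaC : ∀ v ∈ (P iy).support, v ∈ C.support → v = x iy := fun v hv hvc =>
      by_contra fun h => hinternal iy v hv h hvc
    have hPbC : ∀ v ∈ (P iz).support, v ∈ C.support → v = x iz := fun v hv hvc =>
      by_contra fun h => hinternal iz v hv h hvc
    have hij : iy ≠ iz := fun h => hne (congrArg x h)
    have hdisj' : ∀ v ∈ (P iy).support, v ∈ (P iz).support → v = v₀ :=
      fun v hv hv' => hdisj iy iz hij v hv hv'
    have hcyc := aux_cycle_of_paths hv₀ (hx iy) hne (P iy) (P iz) (hP iy) (hP iz)
      hPaC hPbC hdisj' arc harc hs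
    have hedges : ∀ e ∈ ((P iy).append (arc.append (P iz).reverse)).edges,
        e ∈ C.edges ∨ ∃ i, e ∈ (P i).edges := by
      intro e hee
      rw [Walk.edges_append, Walk.edges_append] at hee
      rcases List.mem_append.mp hee with h | h
      · exact Or.inr ⟨iy, h⟩
      · rcases List.mem_append.mp h with h | h
        · exact Or.inl (he e h)
        · refine Or.inr ⟨iz, ?_⟩
          rw [Walk.edges_reverse] at h
          exact List.mem_reverse.mp h
    have hlen := hgirth v₀ _ hcyc hedges
    rw [Walk.length_append, Walk.length_append, Walk.length_reverse, hn] at hlen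
    rw [hfx iy, hfx iz]
    omega
  -- the chain lemma
  have chain : ∀ {b w : V} (q : G.Walk w b) (K : G.Walk b b), K.IsCycle →
      (∀ v, v ∈ K.support ↔ v ∈ C.support) → (∀ e, e ∈ K.edges ↔ e ∈ C.edges) →
      ∀ (ib : Fin t), b = x ib →
      ∀ (S : Finset V) (y : V) (iy : Fin t), y = x iy →
      ∀ (arc : G.Walk y w) (pre : G.Walk b y), pre.append (arc.append q) = K →
      (∀ z ∈ S, z ∈ q.support.tail) → (∀ z ∈ S, ∃ j : Fin t, z = x j) →
      y ∉ S → b ∉ S → (y ≠ b ∨ S.Nonempty) →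
      (S.card + 1) * n ≤ f y + f b + 2 * (∑ z ∈ S, f z) + (arc.length + q.length) := by
    intro b w q
    induction q with
    | nil =>
      intro K hK hKsup hKedg ib hb S y iy hyx arc pre hfac hmem hSx hyS hbS halt
      rename_i u
      have hSempty : S = ∅ := by
        apply Finset.eq_empty_of_forall_notMem
        intro z hz
        simpa using hmem z hz
      subst hSempty
      have hyr : y ≠ u := halt.resolve_right (by simp)
      have harc : arc.IsPath := aux_mid_path K hK pre arc Walk.nil hfac hyr
      have hsubarc : ∀ v ∈ arc.support, v ∈ C.support := by
        intro v hv
        rw [← hKsup v, ← hfac, Walk.mem_support_append_iff]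
        right
        rw [Walk.mem_support_append_iff]
        exact Or.inl hv
      have hedgarc : ∀ e ∈ arc.edges, e ∈ C.edges := by
        intro e hee
        rw [← hKedg e, ← hfac, Walk.edges_append]
        refine List.mem_append_right _ ?_
        rw [Walk.edges_append]
        exact List.mem_append_left _ hee
      have hstep := girthstep y u iy ib hyx hb hyr arc harc hsubarc hedgarc
      simp only [Finset.sum_empty, Finset.card_empty, Walk.length_nil]
      omega
    | @cons w₁ w₂ b' hadj q' ih =>
      intro K hK hKsup hKedg ib hb S y iy hyx arc pre hfac hmem hSx hyS hbS halt
      have hmem' : ∀ z ∈ S, z ∈ q'.support := by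
        intro z hz
        simpa using hmem z hz
      set arc₁ := arc.concat hadj with harc₁def
      have harcapp : arc₁.append q' = arc.append (Walk.cons hadj q') := by
        rw [harc₁def, Walk.concat_append]
      have hfac₁ : pre.append (arc₁.append q') = K := by
        rw [harcapp]; exact hfac
      have hlen₁ : arc₁.length = arc.length + 1 := Walk.length_concat _ _
      by_cases hw'S : w₂ ∈ S
      · obtain ⟨j, hj⟩ := hSx w₂ hw'S
        have hyw' : y ≠ w₂ := fun h => hyS (h ▸ hw'S)
        have harc₁ : arc₁.IsPath := aux_mid_path K hK pre arc₁ q' hfac₁ hyw'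
        have hsub₁ : ∀ v ∈ arc₁.support, v ∈ C.support := by
          intro v hv
          rw [← hKsup v, ← hfac₁, Walk.mem_support_append_iff]
          right
          rw [Walk.mem_support_append_iff]
          exact Or.inl hv
        have hedge₁ : ∀ e ∈ arc₁.edges, e ∈ C.edges := by
          intro e hee
          rw [← hKedg e, ← hfac₁, Walk.edges_append]
          refine List.mem_append_right _ ?_
          rw [Walk.edges_append]
          exact List.mem_append_left _ hee
        have hstep := girthstep y w₂ iy j hyx hj hyw' arc₁ harc₁ hsub₁ hedge₁
        have hrec := ih K hK hKsup hKedg ib hb (S.erase w₂) w₂ j hj Walk.nil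
          (pre.append arc₁)
          (by rw [Walk.nil_append, ← Walk.append_assoc]; exact hfac₁)
          (by
            intro z hz
            have hz' := hmem' z (Finset.mem_of_mem_erase hz)
            have hzne : z ≠ w₂ := Finset.ne_of_mem_erase hz
            rw [Walk.support_eq_cons, List.mem_cons] at hz'
            exact hz'.resolve_left hzne)
          (fun z hz => hSx z (Finset.mem_of_mem_erase hz))
          (Finset.notMem_erase _ _)
          (fun h => hbS (Finset.mem_of_mem_erase h))
          (Or.inl fun h => hbS (h ▸ hw'S))
        have hcard : S.card = (S.erase w₂).card + 1 := (Finset.card_erase_add_one hw'S).symm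
        have hsumS : ∑ z ∈ S, f z = f w₂ + ∑ z ∈ S.erase w₂, f z :=
          (Finset.add_sum_erase S f hw'S).symm
        rw [hcard, hsumS, Walk.length_cons, add_mul ((S.erase w₂).card + 1) 1 n, one_mul]
        rw [Walk.length_nil] at hrec
        rw [hlen₁] at hstep
        linarith
      · have hrec := ih K hK hKsup hKedg ib hb S y iy hyx arc₁ pre hfac₁
          (by
            intro z hz
            have hz' := hmem' z hz
            have hzne : z ≠ w₂ := fun h => hw'S (h ▸ hz)
            rw [Walk.support_eq_cons, List.mem_cons] at hz'
            exact hz'.resolve_left hzne)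
          hSx hyS hbS halt
        rw [hlen₁] at hrec
        rw [Walk.length_cons]
        linarith
  -- apply the chain lemma
  set S₀ := (univ.image x).erase r₀ with hS₀def
  have hrim : r₀ ∈ univ.image x := by
    rw [hr₀]; exact Finset.mem_image_of_mem x (Finset.mem_univ i₀)
  have hcardS₀ : S₀.card = t - 1 := by
    rw [hS₀def, Finset.card_erase_of_mem hrim, Finset.card_image_of_injective _ hxinj,
      Finset.card_univ, Fintype.card_fin]
  have hS₀ne : S₀.Nonempty := Finset.card_pos.mp (by omega)
  have hmain := chain C' C' hC' hsup hedg i₀ hr₀ S₀ r₀ i₀ hr₀ Walk.nil Walk.nil (by simp)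
    (by
      intro z hz
      have hzx : z ∈ C.support := by
        obtain ⟨jz, hjz⟩ := Finset.mem_image.mp (Finset.mem_of_mem_erase hz)
        rw [← hjz.2]; exact hx jz
      rw [← aux_mem_tail C' hC'nil]
      exact (hsup z).mpr hzx)
    (by
      intro z hz
      obtain ⟨jz, _, hjz⟩ := Finset.mem_image.mp (Finset.mem_of_mem_erase hz)
      exact ⟨jz, hjz.symm⟩)
    (Finset.notMem_erase _ _) (Finset.notMem_erase _ _) (Or.inr hS₀ne)
  rw [Walk.length_nil, hlenC'] at hmain
  have hsumim : f r₀ + ∑ z ∈ S₀, f z = ∑ i : Fin t, (P i).length := by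
    rw [hS₀def, Finset.add_sum_erase _ f hrim,
      Finset.sum_image (fun a _ b _ h => hxinj h)]
    exact Finset.sum_congr rfl fun i _ => hfx i
  have hmain2 : t * n ≤ 2 * (∑ i : Fin t, (P i).length) + n := by
    have h1 : (S₀.card + 1) = t := by omega
    rw [h1] at hmain
    omega
  -- counting the vertices of the fan off the cycle
  set A := (univ.filter fun v : V =>
      (∃ i, v ∈ (P i).support) ∧ v ∉ C.support) with hAdef
  have hv₀A : v₀ ∈ A := by
    rw [hAdef, Finset.mem_filter]
    exact ⟨Finset.mem_univ _, ⟨i₀, Walk.start_mem_support _⟩, hv₀⟩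
  have hcardA1 : 1 ≤ A.card := Finset.card_pos.mpr ⟨v₀, hv₀A⟩
  have hcardB : ∀ i, (A.filter (fun v => v ∈ (P i).support)).card = (P i).length := by
    intro i
    have hset : A.filter (fun v => v ∈ (P i).support)
        = (P i).support.toFinset.erase (x i) := by
      ext v
      constructor
      · intro hv
        rw [Finset.mem_filter] at hv
        obtain ⟨hvA, hvP⟩ := hv
        rw [hAdef, Finset.mem_filter] at hvA
        obtain ⟨-, -, hvC⟩ := hvA
        exact Finset.mem_erase.mpr ⟨fun h => hvC (h ▸ hx i), List.mem_toFinset.mpr hvP⟩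
      · intro hv
        obtain ⟨hne2, hvP⟩ := Finset.mem_erase.mp hv
        have hvP' := List.mem_toFinset.mp hvP
        have hvC : v ∉ C.support := hinternal i v hvP' hne2
        exact Finset.mem_filter.mpr
          ⟨Finset.mem_filter.mpr ⟨Finset.mem_univ _, ⟨i, hvP'⟩, hvC⟩, hvP'⟩
    rw [hset, Finset.card_erase_of_mem (List.mem_toFinset.mpr (Walk.end_mem_support _)),
      List.toFinset_card_of_nodup (hP i).support_nodup, Walk.length_support]
    simp
  have hsumlen : ∑ i : Fin t, (P i).length ≤ (A.card - 1) + t := by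
    have h1 : ∑ i : Fin t, (P i).length
        = ∑ v ∈ A, (∑ i : Fin t, if v ∈ (P i).support then 1 else 0) := by
      rw [Finset.sum_comm]
      refine Finset.sum_congr rfl fun i _ => ?_
      rw [← hcardB i, Finset.card_filter]
    rw [h1]
    have h2 : ∀ v ∈ A, (∑ i : Fin t, if v ∈ (P i).support then 1 else 0)
        ≤ if v = v₀ then t else 1 := by
      intro v hvA
      by_cases hvv : v = v₀
      · simp only [hvv, if_pos rfl]
        calc (∑ i : Fin t, if v₀ ∈ (P i).support then 1 else 0)
            ≤ ∑ i : Fin t, 1 := Finset.sum_le_sum fun i _ => by split <;> omega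
          _ = t := by simp
      · rw [if_neg hvv, ← Finset.card_filter]
        apply Finset.card_le_one.mpr
        intro i hi j hj
        rw [Finset.mem_filter] at hi hj
        by_contra hij
        exact hvv (hdisj i j hij v hi.2 hj.2)
    calc ∑ v ∈ A, (∑ i : Fin t, if v ∈ (P i).support then 1 else 0)
        ≤ ∑ v ∈ A, (if v = v₀ then t else 1) := Finset.sum_le_sum h2
      _ = t + ∑ v ∈ A.erase v₀, (if v = v₀ then t else 1) := by
          rw [← Finset.add_sum_erase _ _ hv₀A, if_pos rfl]
      _ = t + (A.card - 1) := by
          rw [Finset.sum_congr rfl (fun v hv => if_neg (Finset.ne_of_mem_erase hv))]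
          simp [Finset.card_erase_of_mem hv₀A]
      _ = (A.card - 1) + t := by omega
  -- final arithmetic
  have hfinal : t * n + 2 ≤ 2 * A.card + 2 * t + n := by omega
  have hq : ((t : ℚ) * n + 2) ≤ 2 * A.card + 2 * t + n := by exact_mod_cast hfinal
  rw [hn]
  linarith
end
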